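/- arXiv:1905.04699 — 4 statements merged into one kernel-verified Lean document; each statement's English description precedes it below -/
import Mathlib

section
/- Let V = kx ⊕ ky over a field k of characteristic zero, and R = span{y⊗y, x⊗y + y⊗x, y⊗x + x⊗x} ⊆ V⊗V (the relations of the quadratic dual of the Jordan plane). If θ: R → k is a linear map with (θ⊗1 - 1⊗θ)(V⊗R ∩ R⊗V) = 0, then θ = 0. That is, the only Clifford map of this quadratic algebra is the trivial one. -/
open TensorProduct

set_option maxHeartbeats 1000000
set_option synthInstance.maxHeartbeats 400000

noncomputable section

variable {k : Type*} [CommRing k] {V : Type*} [AddCommGroup V] [Module k V]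

/-- `θ : R → k` is a Clifford map if `(θ ⊗ 1 - 1 ⊗ θ)(V⊗R ∩ R⊗V) = 0`:
whenever an element of `V ⊗ V ⊗ V` lies both in `V ⊗ R` and in `R ⊗ V`,
applying `1 ⊗ θ` and `θ ⊗ 1` give the same element of `V`. -/
def IsCliffordMap (R : Submodule k (V ⊗[k] V)) (θ : ↥R →ₗ[k] k) : Prop :=
  ∀ (w : V ⊗[k] ↥R) (w' : ↥R ⊗[k] V),
    LinearMap.lTensor V R.subtype w =
      (TensorProduct.assoc k V V V) (LinearMap.rTensor V R.subtype w') →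
    (TensorProduct.rid k V) (LinearMap.lTensor V θ w) =
      (TensorProduct.lid k V) (LinearMap.rTensor V θ w')

end

/-- for the quadratic dual of the Jordan plane, with relations
`R = span{y⊗y, x⊗y + y⊗x, y⊗x + x⊗x}`, the only Clifford map is `θ = 0`. -/
theorem stmt3 (k : Type*) [Field k] [CharZero k]
    (x y : Fin 2 → k) (hx : x = Pi.single 0 1) (hy : y = Pi.single 1 1)
    (R : Submodule k ((Fin 2 → k) ⊗[k] (Fin 2 → k)))
    (hR : R = Submodule.span k {y ⊗ₜ[k] y, x ⊗ₜ[k] y + y ⊗ₜ[k] x, y ⊗ₜ[k] x + x ⊗ₜ[k] x})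
    (θ : ↥R →ₗ[k] k) (hθ : IsCliffordMap R θ) :
    θ = 0 := by
  have h1 : y ⊗ₜ[k] y ∈ R := by rw [hR]; exact Submodule.subset_span (by simp)
  have h2 : x ⊗ₜ[k] y + y ⊗ₜ[k] x ∈ R := by rw [hR]; exact Submodule.subset_span (by simp)
  have h3 : y ⊗ₜ[k] x + x ⊗ₜ[k] x ∈ R := by rw [hR]; exact Submodule.subset_span (by simp)
  set s1 : ↥R := ⟨_, h1⟩ with hs1
  set s2 : ↥R := ⟨_, h2⟩ with hs2
  set s3 : ↥R := ⟨_, h3⟩ with hs3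
  -- condition from x⊗r2 + y⊗(r2+r3) = (2r1+r2)⊗x + r3⊗y in V⊗R ∩ R⊗V
  have cond3 := hθ (x ⊗ₜ s2 + y ⊗ₜ (s2 + s3)) ((s1 + s1 + s2) ⊗ₜ x + s3 ⊗ₜ y) ?_
  -- condition from x⊗r3 + y⊗(2r3) = (2r1+r2+r3)⊗x in V⊗R ∩ R⊗V
  have cond4 := hθ (x ⊗ₜ s3 + y ⊗ₜ (s3 + s3)) ((s1 + s1 + s2 + s3) ⊗ₜ x) ?_
  rotate_left
  · simp only [map_add, LinearMap.lTensor_tmul, LinearMap.rTensor_tmul,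
      Submodule.coe_subtype, hs1, hs2, hs3, AddSubmonoid.mk_add_mk,
      tmul_add, add_tmul, assoc_tmul]
    module
  · simp only [map_add, LinearMap.lTensor_tmul, LinearMap.rTensor_tmul,
      Submodule.coe_subtype, hs1, hs2, hs3, AddSubmonoid.mk_add_mk,
      tmul_add, add_tmul, assoc_tmul]
    module
  simp only [map_add, LinearMap.lTensor_tmul, LinearMap.rTensor_tmul,
    rid_tmul, lid_tmul] at cond3 cond4
  have e3_0 := congrFun cond3 0
  have e3_1 := congrFun cond3 1
  have e4_1 := congrFun cond4 1
  simp only [hx, hy, Pi.add_apply, Pi.smul_apply, Pi.single_apply, smul_eq_mul,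
    Fin.isValue, if_true, if_false, mul_one, mul_zero, add_zero, zero_add,
    show (0 : Fin 2) ≠ 1 by decide, show (1 : Fin 2) ≠ 0 by decide,
    one_ne_zero] at e3_0 e3_1 e4_1
  have hv3 : θ s3 = 0 := by
    have h : (2 : k) * θ s3 = 0 := by linear_combination e4_1
    exact (mul_eq_zero.mp h).resolve_left two_ne_zero
  have hv1 : θ s1 = 0 := by
    have h : (2 : k) * θ s1 = 0 := by linear_combination -e3_0
    exact (mul_eq_zero.mp h).resolve_left two_ne_zero
  have hv2 : θ s2 = 0 := by linear_combination e3_1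
  -- now conclude θ = 0 by span induction
  have key : ∀ v, v ∈ Submodule.span k
      {y ⊗ₜ[k] y, x ⊗ₜ[k] y + y ⊗ₜ[k] x, y ⊗ₜ[k] x + x ⊗ₜ[k] x} →
      ∀ h : v ∈ R, θ ⟨v, h⟩ = 0 := by
    intro v hv
    induction hv using Submodule.span_induction with
    | mem z hz =>
      intro h
      rcases hz with rfl | rfl | rfl
      · exact hv1
      · exact hv2
      · exact hv3
    | zero =>
      intro h
      exact map_zero θ
    | add u v hu hv ihu ihv =>
      intro h
      have hu' : u ∈ R := by rw [hR]; exact hu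
      have hv' : v ∈ R := by rw [hR]; exact hv
      have : (⟨u + v, h⟩ : ↥R) = ⟨u, hu'⟩ + ⟨v, hv'⟩ := rfl
      rw [this, map_add, ihu hu', ihv hv', add_zero]
    | smul a u hu ihu =>
      intro h
      have hu' : u ∈ R := by rw [hR]; exact hu
      have : (⟨a • u, h⟩ : ↥R) = a • ⟨u, hu'⟩ := rfl
      rw [this, map_smul, ihu hu', smul_zero]
  ext ⟨v, hv⟩
  have hv' : v ∈ Submodule.span k
      {y ⊗ₜ[k] y, x ⊗ₜ[k] y + y ⊗ₜ[k] x, y ⊗ₜ[k] x + x ⊗ₜ[k] x} := by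
    rw [← hR]; exact hv
  simpa using key v hv' hv
end

section
/- Let E = T(V)/(R) be a Koszul Frobenius algebra with Clifford map θ: R → k. Let Ṽ = V ⊕ kz and R̃ = R ⊕ span{x⊗z + z⊗x : x ∈ V} ⊕ k(z⊗z), so that the trivial extension Ẽ = T(Ṽ)/(R̃). Define θ̃: R̃ → k by θ̃|_R = θ, θ̃(z⊗z) = 1, θ̃(x⊗z + z⊗x) = 0 for x ∈ V. Then θ̃ is a Clifford map of Ẽ, i.e. (θ̃⊗1 - 1⊗θ̃)(Ṽ⊗R̃ ∩ R̃⊗Ṽ) = 0. -/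
open TensorProduct

noncomputable section

/-- The linear map `V ⊗ V → T(V)` given by multiplication of the two generators. -/
def mu (k : Type*) [CommRing k] (V : Type*) [AddCommGroup V] [Module k V] :
    V ⊗[k] V →ₗ[k] TensorAlgebra k V :=
  (LinearMap.mul' k (TensorAlgebra k V)).comp
    (TensorProduct.map (TensorAlgebra.ι k) (TensorAlgebra.ι k))

variable {k : Type*} [CommRing k] {V : Type*} [AddCommGroup V] [Module k V]

/-- The relation presenting the quadratic algebra `T(V)/(R)`. -/
inductive QuadRel (R : Submodule k (V ⊗[k] V)) :
    TensorAlgebra k V → TensorAlgebra k V → Prop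
  | of (r : ↥R) : QuadRel R (mu k V (r : V ⊗[k] V)) 0

/-- Backelin's criterion, used as definition: a quadratic algebra `T(V)/(R)` is Koszul iff
for each `n` the lattice of subspaces of `V^{⊗n}` generated by the subspaces
`V^{⊗i} ⊗ R ⊗ V^{⊗(n-2-i)}` is distributive. -/
def IsKoszul {k : Type*} [CommRing k] {V : Type*} [AddCommGroup V] [Module k V]
    (R : Submodule k (V ⊗[k] V)) : Prop :=
  ∀ n : ℕ,
    ∀ x ∈ latticeClosure {W : Submodule k (TensorAlgebra k V) | ∃ i, i + 2 ≤ n ∧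
      W = (LinearMap.range (TensorAlgebra.ι k (M := V))) ^ i *
            Submodule.map (mu k V) R *
            (LinearMap.range (TensorAlgebra.ι k (M := V))) ^ (n - 2 - i)},
    ∀ y ∈ latticeClosure {W : Submodule k (TensorAlgebra k V) | ∃ i, i + 2 ≤ n ∧
      W = (LinearMap.range (TensorAlgebra.ι k (M := V))) ^ i *
            Submodule.map (mu k V) R *
            (LinearMap.range (TensorAlgebra.ι k (M := V))) ^ (n - 2 - i)},
    ∀ z ∈ latticeClosure {W : Submodule k (TensorAlgebra k V) | ∃ i, i + 2 ≤ n ∧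
      W = (LinearMap.range (TensorAlgebra.ι k (M := V))) ^ i *
            Submodule.map (mu k V) R *
            (LinearMap.range (TensorAlgebra.ι k (M := V))) ^ (n - 2 - i)},
      x ⊓ (y ⊔ z) = (x ⊓ y) ⊔ (x ⊓ z)

end


set_option synthInstance.maxHeartbeats 1000000
set_option maxHeartbeats 1000000

noncomputable section CliffordHelpers

namespace CliffordAux

variable {k : Type*} [CommRing k] {V : Type*} [AddCommGroup V] [Module k V]

variable (k V) in
def alphaM : (V × k) ⊗[k] (V × k) →ₗ[k] V ⊗[k] V :=
  TensorProduct.map (LinearMap.fst k V k) (LinearMap.fst k V k)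

variable (k V) in
def betaM : (V × k) ⊗[k] (V × k) →ₗ[k] V :=
  (TensorProduct.rid k V).toLinearMap ∘ₗ
    TensorProduct.map (LinearMap.fst k V k) (LinearMap.snd k V k)

variable (k V) in
def gammaM : (V × k) ⊗[k] (V × k) →ₗ[k] V :=
  (TensorProduct.lid k V).toLinearMap ∘ₗ
    TensorProduct.map (LinearMap.snd k V k) (LinearMap.fst k V k)

variable (k V) in
def deltaM : (V × k) ⊗[k] (V × k) →ₗ[k] k :=
  (TensorProduct.lid k k).toLinearMap ∘ₗ
    TensorProduct.map (LinearMap.snd k V k) (LinearMap.snd k V k)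

@[simp] lemma alphaM_tmul (a b : V × k) : alphaM k V (a ⊗ₜ[k] b) = a.1 ⊗ₜ[k] b.1 := rfl

@[simp] lemma betaM_tmul (a b : V × k) : betaM k V (a ⊗ₜ[k] b) = b.2 • a.1 := by
  simp [betaM]

@[simp] lemma gammaM_tmul (a b : V × k) : gammaM k V (a ⊗ₜ[k] b) = a.2 • b.1 := by
  simp [gammaM]

@[simp] lemma deltaM_tmul (a b : V × k) : deltaM k V (a ⊗ₜ[k] b) = a.2 * b.2 := by
  simp [deltaM]

section Generic

variable {M N M₂ N₂ P₂ W W₂ : Type*}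
  [AddCommMonoid M] [Module k M] [AddCommMonoid N] [Module k N]
  [AddCommMonoid M₂] [Module k M₂] [AddCommMonoid N₂] [Module k N₂]
  [AddCommMonoid P₂] [Module k P₂] [AddCommMonoid W] [Module k W]
  [AddCommMonoid W₂] [Module k W₂]

lemma lt_map (a : M →ₗ[k] N) (G : M₂ →ₗ[k] N₂) (F : N₂ →ₗ[k] P₂) (x : M ⊗[k] M₂) :
    LinearMap.lTensor N F (TensorProduct.map a G x) = TensorProduct.map a (F ∘ₗ G) x := by
  induction x using TensorProduct.induction_on with
  | zero => simp
  | tmul m n => simp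
  | add x y hx hy => simp [hx, hy]

lemma rt_map (a : M →ₗ[k] N) (G : M₂ →ₗ[k] N₂) (F : N₂ →ₗ[k] P₂) (x : M₂ ⊗[k] M) :
    LinearMap.rTensor N F (TensorProduct.map G a x) = TensorProduct.map (F ∘ₗ G) a x := by
  induction x using TensorProduct.induction_on with
  | zero => simp
  | tmul m n => simp
  | add x y hx hy => simp [hx, hy]

lemma map_lTensor (p : M →ₗ[k] N) (g : M₂ →ₗ[k] N₂) (F : P₂ →ₗ[k] M₂) (x : M ⊗[k] P₂) :
    TensorProduct.map p g (LinearMap.lTensor M F x) = TensorProduct.map p (g ∘ₗ F) x := by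
  induction x using TensorProduct.induction_on with
  | zero => simp
  | tmul m n => simp
  | add x y hx hy => simp [hx, hy]

lemma map_rTensor (p : M →ₗ[k] N) (g : M₂ →ₗ[k] N₂) (F : P₂ →ₗ[k] M₂) (x : P₂ ⊗[k] M) :
    TensorProduct.map g p (LinearMap.rTensor M F x) = TensorProduct.map (g ∘ₗ F) p x := by
  induction x using TensorProduct.induction_on with
  | zero => simp
  | tmul m n => simp
  | add x y hx hy => simp [hx, hy]

lemma lid_map_q (q : W →ₗ[k] k) (g : W₂ →ₗ[k] N) (F : M →ₗ[k] W₂) (x : W ⊗[k] M) :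
    TensorProduct.lid k N (TensorProduct.map q g (LinearMap.lTensor W F x)) =
      (g ∘ₗ F) (TensorProduct.lid k M (LinearMap.rTensor M q x)) := by
  induction x using TensorProduct.induction_on with
  | zero => simp
  | tmul m n => simp
  | add x y hx hy => simp only [map_add, hx, hy]

lemma rid_map_q (q : W →ₗ[k] k) (g : W₂ →ₗ[k] N) (F : M →ₗ[k] W₂) (x : M ⊗[k] W) :
    TensorProduct.rid k N (TensorProduct.map g q (LinearMap.rTensor W F x)) =
      (g ∘ₗ F) (TensorProduct.rid k M (LinearMap.lTensor M q x)) := by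
  induction x using TensorProduct.induction_on with
  | zero => simp
  | tmul m n => simp
  | add x y hx hy => simp only [map_add, hx, hy]

lemma hGL (f : M →ₗ[k] k) (x : (V × k) ⊗[k] M) :
    TensorProduct.rid k (V × k) (LinearMap.lTensor (V × k) f x) =
      LinearMap.inl k V k
          (TensorProduct.rid k V (TensorProduct.map (LinearMap.fst k V k) f x)) +
        f (TensorProduct.lid k M (LinearMap.rTensor M (LinearMap.snd k V k) x)) •
          (((0 : V), (1 : k)) : V × k) := by
  induction x using TensorProduct.induction_on with
  | zero => simp; rfl
  | tmul v m =>
    simp only [LinearMap.lTensor_tmul, TensorProduct.rid_tmul, TensorProduct.map_tmul,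
      LinearMap.rTensor_tmul, TensorProduct.lid_tmul, map_smul, LinearMap.fst_apply,
      LinearMap.snd_apply, LinearMap.inl_apply, smul_eq_mul]
    apply Prod.ext <;> simp [mul_comm]
  | add x y hx hy =>
    simp only [map_add, hx, hy, add_smul]
    abel

lemma hGR (f : M →ₗ[k] k) (x : M ⊗[k] (V × k)) :
    TensorProduct.lid k (V × k) (LinearMap.rTensor (V × k) f x) =
      LinearMap.inl k V k
          (TensorProduct.lid k V (TensorProduct.map f (LinearMap.fst k V k) x)) +
        f (TensorProduct.rid k M (LinearMap.lTensor M (LinearMap.snd k V k) x)) •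
          (((0 : V), (1 : k)) : V × k) := by
  induction x using TensorProduct.induction_on with
  | zero => simp; rfl
  | tmul m v =>
    simp only [LinearMap.rTensor_tmul, TensorProduct.lid_tmul, TensorProduct.map_tmul,
      LinearMap.lTensor_tmul, TensorProduct.rid_tmul, map_smul, LinearMap.fst_apply,
      LinearMap.snd_apply, LinearMap.inl_apply, smul_eq_mul]
    apply Prod.ext <;> simp [mul_comm]
  | add x y hx hy =>
    simp only [map_add, hx, hy, add_smul]
    abel

end Generic

section Assoc

lemma hA1 (x : ((V × k) ⊗[k] (V × k)) ⊗[k] (V × k)) :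
    TensorProduct.map (LinearMap.fst k V k) (alphaM k V)
        ((TensorProduct.assoc k (V × k) (V × k) (V × k)) x) =
      (TensorProduct.assoc k V V V) (TensorProduct.map (alphaM k V) (LinearMap.fst k V k) x) := by
  induction x using TensorProduct.induction_on with
  | zero => simp
  | tmul a c =>
    induction a using TensorProduct.induction_on with
    | zero => simp
    | tmul p q => simp
    | add a b ha hb => simp only [add_tmul, map_add, ha, hb]
  | add x y hx hy => simp only [map_add, hx, hy]

lemma hA2 (x : ((V × k) ⊗[k] (V × k)) ⊗[k] (V × k)) :
    LinearMap.lTensor V (TensorProduct.rid k V).toLinearMap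
        (TensorProduct.map (LinearMap.fst k V k)
          (TensorProduct.map (LinearMap.fst k V k) (LinearMap.snd k V k))
          ((TensorProduct.assoc k (V × k) (V × k) (V × k)) x)) =
      TensorProduct.rid k (V ⊗[k] V)
        (TensorProduct.map (alphaM k V) (LinearMap.snd k V k) x) := by
  induction x using TensorProduct.induction_on with
  | zero => simp
  | tmul a c =>
    induction a using TensorProduct.induction_on with
    | zero => simp
    | tmul p q => simp [TensorProduct.smul_tmul]
    | add a b ha hb => simp only [add_tmul, map_add, ha, hb]
  | add x y hx hy => simp only [map_add, hx, hy]

lemma hA3 (x : ((V × k) ⊗[k] (V × k)) ⊗[k] (V × k)) :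
    LinearMap.lTensor V (TensorProduct.lid k V).toLinearMap
        (TensorProduct.map (LinearMap.fst k V k)
          (TensorProduct.map (LinearMap.snd k V k) (LinearMap.fst k V k))
          ((TensorProduct.assoc k (V × k) (V × k) (V × k)) x)) =
      TensorProduct.map (betaM k V) (LinearMap.fst k V k) x := by
  induction x using TensorProduct.induction_on with
  | zero => simp
  | tmul a c =>
    induction a using TensorProduct.induction_on with
    | zero => simp
    | tmul p q => simp [TensorProduct.smul_tmul]
    | add a b ha hb => simp only [add_tmul, map_add, ha, hb]
  | add x y hx hy => simp only [map_add, hx, hy]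

lemma hA4 (x : ((V × k) ⊗[k] (V × k)) ⊗[k] (V × k)) :
    TensorProduct.rid k V
        (LinearMap.lTensor V (TensorProduct.lid k k).toLinearMap
          (TensorProduct.map (LinearMap.fst k V k)
            (TensorProduct.map (LinearMap.snd k V k) (LinearMap.snd k V k))
            ((TensorProduct.assoc k (V × k) (V × k) (V × k)) x))) =
      TensorProduct.rid k V
        (TensorProduct.map (betaM k V) (LinearMap.snd k V k) x) := by
  induction x using TensorProduct.induction_on with
  | zero => simp
  | tmul a c =>
    induction a using TensorProduct.induction_on with
    | zero => simp
    | tmul p q => simp [smul_smul, mul_comm]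
    | add a b ha hb => simp only [add_tmul, map_add, ha, hb]
  | add x y hx hy => simp only [map_add, hx, hy]

lemma hA5 (x : ((V × k) ⊗[k] (V × k)) ⊗[k] (V × k)) :
    TensorProduct.lid k (V ⊗[k] V)
        (TensorProduct.map (LinearMap.snd k V k) (alphaM k V)
          ((TensorProduct.assoc k (V × k) (V × k) (V × k)) x)) =
      TensorProduct.map (gammaM k V) (LinearMap.fst k V k) x := by
  induction x using TensorProduct.induction_on with
  | zero => simp
  | tmul a c =>
    induction a using TensorProduct.induction_on with
    | zero => simp
    | tmul p q => simp [TensorProduct.smul_tmul]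
    | add a b ha hb => simp only [add_tmul, map_add, ha, hb]
  | add x y hx hy => simp only [map_add, hx, hy]

lemma hA6 (x : ((V × k) ⊗[k] (V × k)) ⊗[k] (V × k)) :
    TensorProduct.lid k V
        (TensorProduct.map (LinearMap.snd k V k) (betaM k V)
          ((TensorProduct.assoc k (V × k) (V × k) (V × k)) x)) =
      TensorProduct.rid k V
        (TensorProduct.map (gammaM k V) (LinearMap.snd k V k) x) := by
  induction x using TensorProduct.induction_on with
  | zero => simp
  | tmul a c =>
    induction a using TensorProduct.induction_on with
    | zero => simp
    | tmul p q => simp [smul_smul, mul_comm]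
    | add a b ha hb => simp only [add_tmul, map_add, ha, hb]
  | add x y hx hy => simp only [map_add, hx, hy]

lemma hA7 (x : ((V × k) ⊗[k] (V × k)) ⊗[k] (V × k)) :
    TensorProduct.lid k V
        (TensorProduct.map (LinearMap.snd k V k) (gammaM k V)
          ((TensorProduct.assoc k (V × k) (V × k) (V × k)) x)) =
      TensorProduct.lid k V
        (TensorProduct.map (deltaM k V) (LinearMap.fst k V k) x) := by
  induction x using TensorProduct.induction_on with
  | zero => simp
  | tmul a c =>
    induction a using TensorProduct.induction_on with
    | zero => simp
    | tmul p q => simp [smul_smul, mul_comm]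
    | add a b ha hb => simp only [add_tmul, map_add, ha, hb]
  | add x y hx hy => simp only [map_add, hx, hy]

lemma hA8 (x : ((V × k) ⊗[k] (V × k)) ⊗[k] (V × k)) :
    TensorProduct.lid k k
        (TensorProduct.map (LinearMap.snd k V k) (deltaM k V)
          ((TensorProduct.assoc k (V × k) (V × k) (V × k)) x)) =
      TensorProduct.rid k k
        (TensorProduct.map (deltaM k V) (LinearMap.snd k V k) x) := by
  induction x using TensorProduct.induction_on with
  | zero => simp
  | tmul a c =>
    induction a using TensorProduct.induction_on with
    | zero => simp
    | tmul p q => simp [mul_comm, mul_assoc, mul_left_comm]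
    | add a b ha hb => simp only [add_tmul, map_add, ha, hb]
  | add x y hx hy => simp only [map_add, hx, hy]

end Assoc

end CliffordAux

end CliffordHelpers

open TensorProduct in
/-- Let `E = T(V)/(R)` be Koszul Frobenius with Clifford map `θ`.  On
`Ṽ = V ⊕ kz`, with `R̃ = R ⊕ span{x⊗z + z⊗x : x ∈ V} ⊕ k(z⊗z)` (the relations of the
trivial extension `Ẽ`), the extension `θ̃` of `θ` with `θ̃(z⊗z) = 1` and
`θ̃(x⊗z + z⊗x) = 0` is a Clifford map of `Ẽ`. -/
theorem stmt12 (k : Type*) [Field k] [CharZero k]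
    (V : Type*) [AddCommGroup V] [Module k V] [FiniteDimensional k V]
    (R : Submodule k (V ⊗[k] V))
    (hKoszul : IsKoszul R) (hEfd : FiniteDimensional k (RingQuot (QuadRel R)))
    (θ : ↥R →ₗ[k] k) (hθ : IsCliffordMap R θ)
    (z : V × k) (hzdef : z = (0, 1))
    (Rt : Submodule k ((V × k) ⊗[k] (V × k)))
    (hRt : Rt = Submodule.map (TensorProduct.map (LinearMap.inl k V k) (LinearMap.inl k V k)) R ⊔
      Submodule.span k {t | ∃ x : V,
        t = (LinearMap.inl k V k x) ⊗ₜ[k] z + z ⊗ₜ[k] (LinearMap.inl k V k x)} ⊔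
      Submodule.span k {z ⊗ₜ[k] z})
    (θt : ↥Rt →ₗ[k] k)
    (hθtR : ∀ r : ↥R,
      ∀ h : (TensorProduct.map (LinearMap.inl k V k) (LinearMap.inl k V k)) (r : V ⊗[k] V) ∈ Rt,
      θt ⟨_, h⟩ = θ r)
    (hθtz : ∀ h : z ⊗ₜ[k] z ∈ Rt, θt ⟨z ⊗ₜ[k] z, h⟩ = 1)
    (hθtmix : ∀ x : V,
      ∀ h : (LinearMap.inl k V k x) ⊗ₜ[k] z + z ⊗ₜ[k] (LinearMap.inl k V k x) ∈ Rt,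
      θt ⟨_, h⟩ = 0) :
    IsCliffordMap Rt θt := by
  classical
  subst hzdef
  -- inclusions of the three pieces
  have hAle : Submodule.map (TensorProduct.map (LinearMap.inl k V k) (LinearMap.inl k V k)) R ≤ Rt :=
    le_trans (le_sup_of_le_left le_sup_left) hRt.ge
  have hBle : Submodule.span k {t | ∃ x : V,
      t = (LinearMap.inl k V k x) ⊗ₜ[k] (((0 : V), (1 : k)) : V × k) +
        (((0 : V), (1 : k)) : V × k) ⊗ₜ[k] (LinearMap.inl k V k x)} ≤ Rt :=
    le_trans (le_sup_of_le_left le_sup_right) hRt.ge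
  have hCle : Submodule.span k
      {(((0 : V), (1 : k)) : V × k) ⊗ₜ[k] (((0 : V), (1 : k)) : V × k)} ≤ Rt :=
    le_trans le_sup_right hRt.ge
  -- values of the four component maps on the image of R
  have hαJ : ∀ y : V ⊗[k] V,
      CliffordAux.alphaM k V
        (TensorProduct.map (LinearMap.inl k V k) (LinearMap.inl k V k) y) = y := by
    intro y
    induction y using TensorProduct.induction_on with
    | zero => simp
    | tmul a b => simp
    | add a b ha hb => simp [ha, hb]
  have hβJ : ∀ y : V ⊗[k] V,
      CliffordAux.betaM k V
        (TensorProduct.map (LinearMap.inl k V k) (LinearMap.inl k V k) y) = 0 := by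
    intro y
    induction y using TensorProduct.induction_on with
    | zero => simp
    | tmul a b => simp
    | add a b ha hb => simp [ha, hb]
  have hγJ : ∀ y : V ⊗[k] V,
      CliffordAux.gammaM k V
        (TensorProduct.map (LinearMap.inl k V k) (LinearMap.inl k V k) y) = 0 := by
    intro y
    induction y using TensorProduct.induction_on with
    | zero => simp
    | tmul a b => simp
    | add a b ha hb => simp [ha, hb]
  have hδJ : ∀ y : V ⊗[k] V,
      CliffordAux.deltaM k V
        (TensorProduct.map (LinearMap.inl k V k) (LinearMap.inl k V k) y) = 0 := by
    intro y
    induction y using TensorProduct.induction_on with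
    | zero => simp
    | tmul a b => simp
    | add a b ha hb => simp [ha, hb]
  -- alphaM maps Rt into R
  have hmemα : ∀ x ∈ Rt, CliffordAux.alphaM k V x ∈ R := by
    have hle : Rt ≤ Submodule.comap (CliffordAux.alphaM k V) R := by
      refine le_trans hRt.le (sup_le (sup_le ?_ ?_) ?_)
      · rintro t ⟨r, hr, rfl⟩
        simpa [Submodule.mem_comap, hαJ] using hr
      · refine Submodule.span_le.2 ?_
        rintro t ⟨x, rfl⟩
        simp [Submodule.mem_comap]
      · refine Submodule.span_le.2 ?_
        rintro t ht
        rw [Set.mem_singleton_iff] at ht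
        subst ht
        simp [Submodule.mem_comap]
    exact fun x hx => hle hx
  -- betaM and gammaM agree on Rt
  have hβγ : ∀ x ∈ Rt, CliffordAux.betaM k V x = CliffordAux.gammaM k V x := by
    have hle : Rt ≤ LinearMap.ker (CliffordAux.betaM k V - CliffordAux.gammaM k V) := by
      refine le_trans hRt.le (sup_le (sup_le ?_ ?_) ?_)
      · rintro t ⟨r, hr, rfl⟩
        simp [LinearMap.mem_ker, LinearMap.sub_apply, hβJ, hγJ]
      · refine Submodule.span_le.2 ?_
        rintro t ⟨x, rfl⟩
        simp [LinearMap.mem_ker, LinearMap.sub_apply]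
      · refine Submodule.span_le.2 ?_
        rintro t ht
        rw [Set.mem_singleton_iff] at ht
        subst ht
        simp [LinearMap.mem_ker, LinearMap.sub_apply]
    intro x hx
    have h0 := hle hx
    rw [LinearMap.mem_ker, LinearMap.sub_apply, sub_eq_zero] at h0
    exact h0
  set ah : ↥Rt →ₗ[k] ↥R :=
    LinearMap.codRestrict R (CliffordAux.alphaM k V ∘ₗ Rt.subtype) (fun t => hmemα _ t.2)
    with hahdef
  set bh : ↥Rt →ₗ[k] V := CliffordAux.betaM k V ∘ₗ Rt.subtype with hbhdef
  set gh : ↥Rt →ₗ[k] V := CliffordAux.gammaM k V ∘ₗ Rt.subtype with hghdef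
  set dh : ↥Rt →ₗ[k] k := CliffordAux.deltaM k V ∘ₗ Rt.subtype with hdhdef
  have hbg : bh = gh := by
    refine LinearMap.ext fun t => ?_
    rw [hbhdef, hghdef]
    exact hβγ _ t.2
  have hsubα : CliffordAux.alphaM k V ∘ₗ Rt.subtype = R.subtype ∘ₗ ah := by
    rw [hahdef, LinearMap.subtype_comp_codRestrict]
  -- θt decomposes as θ ∘ ah + dh
  have hθteq : θt = θ ∘ₗ ah + dh := by
    have key : Rt ≤ Submodule.map Rt.subtype (LinearMap.ker (θt - (θ ∘ₗ ah + dh))) := by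
      refine le_trans hRt.le (sup_le (sup_le ?_ ?_) ?_)
      · rintro t ⟨r, hr, rfl⟩
        have hmem : TensorProduct.map (LinearMap.inl k V k) (LinearMap.inl k V k) r ∈ Rt :=
          hAle ⟨r, hr, rfl⟩
        refine ⟨⟨_, hmem⟩, ?_, rfl⟩
        simp only [SetLike.mem_coe, LinearMap.mem_ker, LinearMap.sub_apply, sub_eq_zero]
        have h1 : ah ⟨_, hmem⟩ = ⟨r, hr⟩ := by
          refine Subtype.ext ?_
          rw [hahdef]
          simpa using hαJ r
        have h2 : θt ⟨_, hmem⟩ = θ ⟨r, hr⟩ := hθtR ⟨r, hr⟩ hmem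
        have h3 : dh ⟨_, hmem⟩ = 0 := by
          rw [hdhdef]
          simpa using hδJ r
        rw [h2, LinearMap.add_apply, LinearMap.comp_apply, h1, h3, add_zero]
      · refine Submodule.span_le.2 ?_
        rintro t ⟨x, rfl⟩
        have hmem : (LinearMap.inl k V k x) ⊗ₜ[k] (((0 : V), (1 : k)) : V × k) +
            (((0 : V), (1 : k)) : V × k) ⊗ₜ[k] (LinearMap.inl k V k x) ∈ Rt :=
          hBle (Submodule.subset_span ⟨x, rfl⟩)
        refine ⟨⟨_, hmem⟩, ?_, rfl⟩
        simp only [SetLike.mem_coe, LinearMap.mem_ker, LinearMap.sub_apply, sub_eq_zero]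
        rw [hθtmix x hmem]
        have h1 : ah ⟨_, hmem⟩ = 0 := by
          refine Subtype.ext ?_
          rw [hahdef]
          simp
        have h3 : dh ⟨_, hmem⟩ = 0 := by
          rw [hdhdef]
          simp
        rw [LinearMap.add_apply, LinearMap.comp_apply, h1, h3, map_zero, add_zero]
      · refine Submodule.span_le.2 ?_
        rintro t ht
        rw [Set.mem_singleton_iff] at ht
        subst ht
        have hmem : (((0 : V), (1 : k)) : V × k) ⊗ₜ[k] (((0 : V), (1 : k)) : V × k) ∈ Rt :=
          hCle (Submodule.subset_span rfl)
        refine ⟨⟨_, hmem⟩, ?_, rfl⟩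
        simp only [SetLike.mem_coe, LinearMap.mem_ker, LinearMap.sub_apply, sub_eq_zero]
        rw [hθtz hmem]
        have h1 : ah ⟨_, hmem⟩ = 0 := by
          refine Subtype.ext ?_
          rw [hahdef]
          simp
        have h3 : dh ⟨_, hmem⟩ = 1 := by
          rw [hdhdef]
          simp
        rw [LinearMap.add_apply, LinearMap.comp_apply, h1, h3, map_zero, zero_add]
    refine LinearMap.ext fun t => ?_
    obtain ⟨u, hu, hut⟩ := key t.2
    obtain rfl : u = t := Subtype.ext hut
    simp only [SetLike.mem_coe, LinearMap.mem_ker, LinearMap.sub_apply, sub_eq_zero] at hu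
    exact hu
  -- the main computation
  intro w w' h
  set s : ↥Rt := TensorProduct.lid k ↥Rt (LinearMap.rTensor ↥Rt (LinearMap.snd k V k) w) with hs
  set s' : ↥Rt := TensorProduct.rid k ↥Rt (LinearMap.lTensor ↥Rt (LinearMap.snd k V k) w')
    with hs'
  have C1 : LinearMap.lTensor V R.subtype
        (TensorProduct.map (LinearMap.fst k V k) ah w) =
      TensorProduct.assoc k V V V (LinearMap.rTensor V R.subtype
        (TensorProduct.map ah (LinearMap.fst k V k) w')) := by
    have e : TensorProduct.map (LinearMap.fst k V k) (CliffordAux.alphaM k V)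
        (LinearMap.lTensor (V × k) Rt.subtype w) =
      TensorProduct.map (LinearMap.fst k V k) (CliffordAux.alphaM k V)
        ((TensorProduct.assoc k (V × k) (V × k) (V × k))
          (LinearMap.rTensor (V × k) Rt.subtype w')) := by rw [h]
    rw [CliffordAux.map_lTensor, hsubα, ← CliffordAux.lt_map,
      CliffordAux.hA1, CliffordAux.map_rTensor, hsubα, ← CliffordAux.rt_map] at e
    exact e
  have C2 : TensorProduct.map (LinearMap.fst k V k) bh w = ((ah s' : ↥R) : V ⊗[k] V) := by
    have e : LinearMap.lTensor V (TensorProduct.rid k V).toLinearMap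
        (TensorProduct.map (LinearMap.fst k V k)
          (TensorProduct.map (LinearMap.fst k V k) (LinearMap.snd k V k))
          (LinearMap.lTensor (V × k) Rt.subtype w)) =
      LinearMap.lTensor V (TensorProduct.rid k V).toLinearMap
        (TensorProduct.map (LinearMap.fst k V k)
          (TensorProduct.map (LinearMap.fst k V k) (LinearMap.snd k V k))
          ((TensorProduct.assoc k (V × k) (V × k) (V × k))
            (LinearMap.rTensor (V × k) Rt.subtype w'))) := by rw [h]
    rw [CliffordAux.map_lTensor, CliffordAux.lt_map, CliffordAux.hA2,
      CliffordAux.rid_map_q, hsubα] at e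
    have fold : (TensorProduct.rid k V).toLinearMap ∘ₗ
        (TensorProduct.map (LinearMap.fst k V k) (LinearMap.snd k V k) ∘ₗ Rt.subtype) = bh := by
      rw [hbhdef]; rfl
    rw [fold, ← hs'] at e
    simpa using e
  have C3 : TensorProduct.map (LinearMap.fst k V k) gh w =
      TensorProduct.map bh (LinearMap.fst k V k) w' := by
    have e : LinearMap.lTensor V (TensorProduct.lid k V).toLinearMap
        (TensorProduct.map (LinearMap.fst k V k)
          (TensorProduct.map (LinearMap.snd k V k) (LinearMap.fst k V k))
          (LinearMap.lTensor (V × k) Rt.subtype w)) =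
      LinearMap.lTensor V (TensorProduct.lid k V).toLinearMap
        (TensorProduct.map (LinearMap.fst k V k)
          (TensorProduct.map (LinearMap.snd k V k) (LinearMap.fst k V k))
          ((TensorProduct.assoc k (V × k) (V × k) (V × k))
            (LinearMap.rTensor (V × k) Rt.subtype w'))) := by rw [h]
    rw [CliffordAux.map_lTensor, CliffordAux.lt_map, CliffordAux.hA3,
      CliffordAux.map_rTensor, ← hbhdef] at e
    have fold : (TensorProduct.lid k V).toLinearMap ∘ₗ
        (TensorProduct.map (LinearMap.snd k V k) (LinearMap.fst k V k) ∘ₗ Rt.subtype) = gh := by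
      rw [hghdef]; rfl
    rw [fold] at e
    exact e
  have C4 : TensorProduct.rid k V (TensorProduct.map (LinearMap.fst k V k) dh w) = bh s' := by
    have e : TensorProduct.rid k V
        (LinearMap.lTensor V (TensorProduct.lid k k).toLinearMap
          (TensorProduct.map (LinearMap.fst k V k)
            (TensorProduct.map (LinearMap.snd k V k) (LinearMap.snd k V k))
            (LinearMap.lTensor (V × k) Rt.subtype w))) =
      TensorProduct.rid k V
        (LinearMap.lTensor V (TensorProduct.lid k k).toLinearMap
          (TensorProduct.map (LinearMap.fst k V k)
            (TensorProduct.map (LinearMap.snd k V k) (LinearMap.snd k V k))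
            ((TensorProduct.assoc k (V × k) (V × k) (V × k))
              (LinearMap.rTensor (V × k) Rt.subtype w')))) := by rw [h]
    rw [CliffordAux.map_lTensor, CliffordAux.lt_map, CliffordAux.hA4,
      CliffordAux.rid_map_q, ← hbhdef, ← hs'] at e
    have fold : (TensorProduct.lid k k).toLinearMap ∘ₗ
        (TensorProduct.map (LinearMap.snd k V k) (LinearMap.snd k V k) ∘ₗ Rt.subtype) = dh := by
      rw [hdhdef]; rfl
    rw [fold] at e
    exact e
  have C5 : ((ah s : ↥R) : V ⊗[k] V) =
      TensorProduct.map gh (LinearMap.fst k V k) w' := by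
    have e : TensorProduct.lid k (V ⊗[k] V)
        (TensorProduct.map (LinearMap.snd k V k) (CliffordAux.alphaM k V)
          (LinearMap.lTensor (V × k) Rt.subtype w)) =
      TensorProduct.lid k (V ⊗[k] V)
        (TensorProduct.map (LinearMap.snd k V k) (CliffordAux.alphaM k V)
          ((TensorProduct.assoc k (V × k) (V × k) (V × k))
            (LinearMap.rTensor (V × k) Rt.subtype w'))) := by rw [h]
    rw [CliffordAux.lid_map_q, CliffordAux.hA5, CliffordAux.map_rTensor,
      hsubα, ← hghdef, ← hs] at e
    simpa using e
  have C6 : bh s = gh s' := by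
    have e : TensorProduct.lid k V
        (TensorProduct.map (LinearMap.snd k V k) (CliffordAux.betaM k V)
          (LinearMap.lTensor (V × k) Rt.subtype w)) =
      TensorProduct.lid k V
        (TensorProduct.map (LinearMap.snd k V k) (CliffordAux.betaM k V)
          ((TensorProduct.assoc k (V × k) (V × k) (V × k))
            (LinearMap.rTensor (V × k) Rt.subtype w'))) := by rw [h]
    rw [CliffordAux.lid_map_q, CliffordAux.hA6, CliffordAux.rid_map_q,
      ← hbhdef, ← hghdef, ← hs, ← hs'] at e
    exact e
  have C7 : gh s = TensorProduct.lid k V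
      (TensorProduct.map dh (LinearMap.fst k V k) w') := by
    have e : TensorProduct.lid k V
        (TensorProduct.map (LinearMap.snd k V k) (CliffordAux.gammaM k V)
          (LinearMap.lTensor (V × k) Rt.subtype w)) =
      TensorProduct.lid k V
        (TensorProduct.map (LinearMap.snd k V k) (CliffordAux.gammaM k V)
          ((TensorProduct.assoc k (V × k) (V × k) (V × k))
            (LinearMap.rTensor (V × k) Rt.subtype w'))) := by rw [h]
    rw [CliffordAux.lid_map_q, CliffordAux.hA7, CliffordAux.map_rTensor,
      ← hghdef, ← hdhdef, ← hs] at e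
    exact e
  have C8 : dh s = dh s' := by
    have e : TensorProduct.lid k k
        (TensorProduct.map (LinearMap.snd k V k) (CliffordAux.deltaM k V)
          (LinearMap.lTensor (V × k) Rt.subtype w)) =
      TensorProduct.lid k k
        (TensorProduct.map (LinearMap.snd k V k) (CliffordAux.deltaM k V)
          ((TensorProduct.assoc k (V × k) (V × k) (V × k))
            (LinearMap.rTensor (V × k) Rt.subtype w'))) := by rw [h]
    rw [CliffordAux.lid_map_q, CliffordAux.hA8, CliffordAux.rid_map_q,
      ← hdhdef, ← hs, ← hs'] at e
    exact e
  have hαss : ah s = ah s' := by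
    refine Subtype.ext ?_
    calc ((ah s : ↥R) : V ⊗[k] V)
        = TensorProduct.map gh (LinearMap.fst k V k) w' := C5
      _ = TensorProduct.map bh (LinearMap.fst k V k) w' := by rw [hbg]
      _ = TensorProduct.map (LinearMap.fst k V k) gh w := C3.symm
      _ = TensorProduct.map (LinearMap.fst k V k) bh w := by rw [hbg]
      _ = ((ah s' : ↥R) : V ⊗[k] V) := C2
  have G2 : θt s = θt s' := by
    rw [hθteq]
    simp only [LinearMap.add_apply, LinearMap.comp_apply, hαss, C8]
  have hδpart : TensorProduct.rid k V (TensorProduct.map (LinearMap.fst k V k) dh w) =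
      TensorProduct.lid k V (TensorProduct.map dh (LinearMap.fst k V k) w') := by
    calc TensorProduct.rid k V (TensorProduct.map (LinearMap.fst k V k) dh w)
        = bh s' := C4
      _ = gh s' := by rw [hbg]
      _ = bh s := C6.symm
      _ = gh s := by rw [hbg]
      _ = _ := C7
  have hθpart : TensorProduct.rid k V
        (TensorProduct.map (LinearMap.fst k V k) (θ ∘ₗ ah) w) =
      TensorProduct.lid k V (TensorProduct.map (θ ∘ₗ ah) (LinearMap.fst k V k) w') := by
    rw [← CliffordAux.lt_map, ← CliffordAux.rt_map]
    exact hθ _ _ C1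
  have G1 : TensorProduct.rid k V (TensorProduct.map (LinearMap.fst k V k) θt w) =
      TensorProduct.lid k V (TensorProduct.map θt (LinearMap.fst k V k) w') := by
    rw [hθteq, TensorProduct.map_add_right, TensorProduct.map_add_left,
      LinearMap.add_apply, LinearMap.add_apply, map_add, map_add, hθpart, hδpart]
  rw [CliffordAux.hGL θt w, CliffordAux.hGR θt w', ← hs, ← hs', G1, G2]
end

section
/- Let B = T(V)/(R) be a quadratic algebra with a central regular element z ∈ B_2 such that E = B/Bz is a Koszul Frobenius algebra. Pick r₀ ∈ V⊗V with π(r₀) = z (π: T(V) → B the projection), set R' = kr₀ ⊕ R, so E = T(V)/(R'). If α ∈ R'⊗V ∩ V⊗R' is written as α = v₀⊗r₀ + Σᵢvᵢ⊗rᵢ = r₀⊗v₀' + Σᵢrᵢ⊗vᵢ' with {r₁,...,r_t} a basis of R and vᵢ, vᵢ' ∈ V, then v₀ = v₀'. -/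
open TensorProduct

/-- Let `B = T(V)/(R)` be quadratic with a central regular element
`z = π(r₀) ∈ B₂`, and `E = B/Bz = T(V)/(R')` with `R' = kr₀ ⊕ R`.  If
`α = v₀⊗r₀ + Σᵢ vᵢ⊗rᵢ = r₀⊗v₀' + Σᵢ rᵢ⊗vᵢ' ∈ V⊗R' ∩ R'⊗V`, then `v₀ = v₀'`. -/
theorem stmt14 (k : Type*) [Field k] [CharZero k]
    (V : Type*) [AddCommGroup V] [Module k V] [FiniteDimensional k V]
    (R : Submodule k (V ⊗[k] V)) (r₀ : V ⊗[k] V)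
    (hdisj : Submodule.span k {r₀} ⊓ R = ⊥)
    (z : RingQuot (QuadRel R))
    (hz : z = RingQuot.mkAlgHom k (QuadRel R) (mu k V r₀))
    (hcentral : ∀ b : RingQuot (QuadRel R), z * b = b * z)
    (hregl : ∀ b : RingQuot (QuadRel R), z * b = 0 → b = 0)
    (hregr : ∀ b : RingQuot (QuadRel R), b * z = 0 → b = 0)
    (hinj : ∀ v : V, RingQuot.mkAlgHom k (QuadRel R) (TensorAlgebra.ι k v) = 0 → v = 0)
    (v₀ v₀' : V) (s : V ⊗[k] ↥R) (s' : ↥R ⊗[k] V)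
    (heq : v₀ ⊗ₜ[k] r₀ + LinearMap.lTensor V R.subtype s =
      (TensorProduct.assoc k V V V)
        (r₀ ⊗ₜ[k] v₀' + LinearMap.rTensor V R.subtype s')) :
    v₀ = v₀' := by
  set π := RingQuot.mkAlgHom k (QuadRel R)
  have hmu : ∀ r : ↥R, π (mu k V (r : V ⊗[k] V)) = 0 := by
    intro r
    have := RingQuot.mkAlgHom_rel k (QuadRel.of r)
    simpa using this
  -- f : V ⊗ (V ⊗ V) → B
  let f : V ⊗[k] (V ⊗[k] V) →ₗ[k] RingQuot (QuadRel R) :=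
    (LinearMap.mul' k (RingQuot (QuadRel R))).comp
      (TensorProduct.map (π.toLinearMap.comp (TensorAlgebra.ι k))
        (π.toLinearMap.comp (mu k V)))
  -- g : (V ⊗ V) ⊗ V → B
  let g : (V ⊗[k] V) ⊗[k] V →ₗ[k] RingQuot (QuadRel R) :=
    (LinearMap.mul' k (RingQuot (QuadRel R))).comp
      (TensorProduct.map (π.toLinearMap.comp (mu k V))
        (π.toLinearMap.comp (TensorAlgebra.ι k)))
  have hf_tmul : ∀ (v : V) (w : V ⊗[k] V),
      f (v ⊗ₜ w) = π (TensorAlgebra.ι k v) * π (mu k V w) := by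
    intro v w; simp [f]
  have hg_tmul : ∀ (w : V ⊗[k] V) (v : V),
      g (w ⊗ₜ v) = π (mu k V w) * π (TensorAlgebra.ι k v) := by
    intro w v; simp [g]
  have hfg : f.comp (TensorProduct.assoc k V V V).toLinearMap = g := by
    ext x y zz
    simp [f, g, mu, mul_assoc]
  have hfs : f (LinearMap.lTensor V R.subtype s) = 0 := by
    have : f.comp (LinearMap.lTensor V R.subtype) = 0 := by
      ext v r
      simp [f, hmu]
    have := congrArg (fun m => m s) (congrArg DFunLike.coe this)
    simpa using this
  have hgs : g (LinearMap.rTensor V R.subtype s') = 0 := by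
    have : g.comp (LinearMap.rTensor V R.subtype) = 0 := by
      ext r v
      simp [g, hmu]
    have := congrArg (fun m => m s') (congrArg DFunLike.coe this)
    simpa using this
  have key := congrArg f heq
  rw [map_add, hfs, add_zero, hf_tmul] at key
  have : f ((TensorProduct.assoc k V V V) (r₀ ⊗ₜ[k] v₀' + LinearMap.rTensor V R.subtype s'))
      = g (r₀ ⊗ₜ[k] v₀') := by
    have h1 : f ((TensorProduct.assoc k V V V) (r₀ ⊗ₜ[k] v₀' + LinearMap.rTensor V R.subtype s'))
        = g (r₀ ⊗ₜ[k] v₀' + LinearMap.rTensor V R.subtype s') := by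
      rw [← hfg]; rfl
    rw [h1, map_add, hgs, add_zero]
  rw [this, hg_tmul, ← hz] at key
  -- key : π (ι v₀) * z = z * π (ι v₀')
  rw [hcentral (π (TensorAlgebra.ι k v₀'))] at key
  have hsub : (π (TensorAlgebra.ι k v₀) - π (TensorAlgebra.ι k v₀')) * z = 0 := by
    rw [sub_mul, key, sub_self]
  have := hregr _ hsub
  have h0 : π (TensorAlgebra.ι k (v₀ - v₀')) = 0 := by
    rw [map_sub, map_sub, this]
  have := hinj _ h0
  exact sub_eq_zero.mp this
end

section
/- Let B = T(V)/(R) be a quadratic algebra with central regular element z ∈ B_2, such that E = B/Bz = T(V)/(R') with R' = kr₀ ⊕ R where π(r₀) = z. Define θ: R' → k by θ(r₀) = 1 and θ|_R = 0. Then θ is a Clifford map of E, i.e. (θ⊗1 - 1⊗θ)(V⊗R' ∩ R'⊗V) = 0. -/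
open TensorProduct

/-- Let `B = T(V)/(R)` be quadratic with central regular element
`z = π(r₀) ∈ B₂`, and `E = B/Bz = T(V)/(R')` with `R' = kr₀ ⊕ R`.  Then the linear map
`θ : R' → k` with `θ(r₀) = 1` and `θ|_R = 0` is a Clifford map of `E`. -/
theorem stmt15 (k : Type*) [Field k] [CharZero k]
    (V : Type*) [AddCommGroup V] [Module k V] [FiniteDimensional k V]
    (R : Submodule k (V ⊗[k] V)) (r₀ : V ⊗[k] V)
    (hdisj : Submodule.span k {r₀} ⊓ R = ⊥)
    (z : RingQuot (QuadRel R))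
    (hz : z = RingQuot.mkAlgHom k (QuadRel R) (mu k V r₀))
    (hcentral : ∀ b : RingQuot (QuadRel R), z * b = b * z)
    (hregl : ∀ b : RingQuot (QuadRel R), z * b = 0 → b = 0)
    (hregr : ∀ b : RingQuot (QuadRel R), b * z = 0 → b = 0)
    (hinj : ∀ v : V, RingQuot.mkAlgHom k (QuadRel R) (TensorAlgebra.ι k v) = 0 → v = 0)
    (R' : Submodule k (V ⊗[k] V)) (hR' : R' = Submodule.span k {r₀} ⊔ R)
    (θ : ↥R' →ₗ[k] k)
    (hθr₀ : ∀ h : r₀ ∈ R', θ ⟨r₀, h⟩ = 1)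
    (hθR : ∀ r ∈ R, ∀ h : r ∈ R', θ ⟨r, h⟩ = 0) :
    IsCliffordMap R' θ := by
  intro w w' hww'
  set π := RingQuot.mkAlgHom k (QuadRel R) with hπ
  -- relations in R are killed in B
  have hRzero : ∀ r ∈ R, π (mu k V r) = 0 := by
    intro r hr
    have := RingQuot.mkAlgHom_rel k (QuadRel.of (R := R) ⟨r, hr⟩)
    simpa using this
  have hr₀R' : r₀ ∈ R' := by
    rw [hR']; exact Submodule.mem_sup_left (Submodule.mem_span_singleton_self _)
  -- key lemma: π (mu x) = θ x • z for x ∈ R'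
  have hkey : ∀ x : ↥R', π (mu k V (x : V ⊗[k] V)) = θ x • z := by
    rintro ⟨x, hx⟩
    have hx' : x ∈ Submodule.span k {r₀} ⊔ R := hR' ▸ hx
    obtain ⟨y, hy, r, hr, hyr⟩ := Submodule.mem_sup.mp hx'
    obtain ⟨c, rfl⟩ := Submodule.mem_span_singleton.mp hy
    have hrR' : r ∈ R' := hR' ▸ Submodule.mem_sup_right hr
    have hxeq : (⟨x, hx⟩ : ↥R') = c • ⟨r₀, hr₀R'⟩ + ⟨r, hrR'⟩ := by
      apply Subtype.ext; simp [← hyr]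
    rw [hxeq, map_add, map_smul, hθr₀, hθR r hr]
    simp only [Submodule.coe_smul, Submodule.coe_add, map_add, map_smul]
    rw [hRzero r hr, ← hz]
    simp [smul_smul]
  -- the two multiplication maps into B
  set ιπ : V →ₗ[k] RingQuot (QuadRel R) := π.toLinearMap ∘ₗ TensorAlgebra.ι k with hιπ
  set mπ : V ⊗[k] V →ₗ[k] RingQuot (QuadRel R) := π.toLinearMap ∘ₗ mu k V with hmπ
  set φ : V ⊗[k] (V ⊗[k] V) →ₗ[k] RingQuot (QuadRel R) :=
    (LinearMap.mul' k (RingQuot (QuadRel R))) ∘ₗ (TensorProduct.map ιπ mπ) with hφ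
  set ψ : (V ⊗[k] V) ⊗[k] V →ₗ[k] RingQuot (QuadRel R) :=
    (LinearMap.mul' k (RingQuot (QuadRel R))) ∘ₗ (TensorProduct.map mπ ιπ) with hψ
  -- φ ∘ assoc = ψ
  have hφψ : φ ∘ₗ (TensorProduct.assoc k V V V).toLinearMap = ψ := by
    apply TensorProduct.ext_threefold
    intro a b c
    simp [hφ, hψ, hιπ, hmπ, mu, LinearMap.mul'_apply, map_mul, mul_assoc]
  -- φ computes on V ⊗ R'
  have key1 : ∀ u : V ⊗[k] ↥R', φ (LinearMap.lTensor V R'.subtype u) =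
      ιπ ((TensorProduct.rid k V) (LinearMap.lTensor V θ u)) * z := by
    intro u
    induction u using TensorProduct.induction_on with
    | zero => simp
    | tmul v r =>
        simp only [LinearMap.lTensor_tmul, hφ, LinearMap.coe_comp, Function.comp_apply,
          TensorProduct.map_tmul, LinearMap.mul'_apply, Submodule.coe_subtype,
          TensorProduct.rid_tmul, map_smul]
        rw [show mπ (r : V ⊗[k] V) = θ r • z from hkey r]
        rw [mul_smul_comm, smul_mul_assoc]
    | add x y hx hy =>
        simp only [map_add, add_mul]
        rw [hx, hy]
  -- ψ computes on R' ⊗ V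
  have key2 : ∀ u : ↥R' ⊗[k] V, ψ (LinearMap.rTensor V R'.subtype u) =
      z * ιπ ((TensorProduct.lid k V) (LinearMap.rTensor V θ u)) := by
    intro u
    induction u using TensorProduct.induction_on with
    | zero => simp
    | tmul r v =>
        simp only [LinearMap.rTensor_tmul, hψ, LinearMap.coe_comp, Function.comp_apply,
          TensorProduct.map_tmul, LinearMap.mul'_apply, Submodule.coe_subtype,
          TensorProduct.lid_tmul, map_smul]
        rw [show mπ (r : V ⊗[k] V) = θ r • z from hkey r]
        rw [smul_mul_assoc, mul_smul_comm]
    | add x y hx hy =>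
        simp only [map_add, mul_add]
        rw [hx, hy]
  -- combine
  set v₀ := (TensorProduct.rid k V) (LinearMap.lTensor V θ w)
  set v₁ := (TensorProduct.lid k V) (LinearMap.rTensor V θ w')
  have hmain : ιπ v₀ * z = ιπ v₁ * z := by
    have h1 : φ (LinearMap.lTensor V R'.subtype w) =
        ψ (LinearMap.rTensor V R'.subtype w') := by
      rw [hww', ← hφψ]; rfl
    rw [key1, key2] at h1
    rw [h1]
    exact hcentral (ιπ v₁)
  have hsub : (ιπ v₀ - ιπ v₁) * z = 0 := by
    rw [sub_mul, hmain, sub_self]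
  have h0 : ιπ v₀ - ιπ v₁ = 0 := hregr _ hsub
  have hfin : v₀ - v₁ = 0 := by
    apply hinj
    have : ιπ (v₀ - v₁) = 0 := by rw [map_sub, h0]
    simpa [hιπ] using this
  exact sub_eq_zero.mp hfin
end
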